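/- The determinant is characterized by its symmetries: let n ≥ 1 and let f be a multivariate polynomial over ℂ in the n² variables x_{ij}, homogeneous of degree n, such that (i) for all A, B ∈ SL_n(ℂ) and all X ∈ ℂ^{n×n} one has f(A·X·B) = f(X), and (ii) f(Xᵀ) = f(X) for all X ∈ ℂ^{n×n}. Then there exists z ∈ ℂ with f = z·DET_n. -/

import Mathlib

open Matrix

/-- The determinant polynomial `DET_n = ∑_{π ∈ S_n} sgn(π) ∏_i x_{i,π(i)}` in the `n²`
variables `x_{ij}`, over ℂ. -/
noncomputable def detPoly (n : ℕ) : MvPolynomial (Fin n × Fin n) ℂ :=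
  ∑ π : Equiv.Perm (Fin n),
    MvPolynomial.C ((Equiv.Perm.sign π : ℤ) : ℂ) * ∏ i, MvPolynomial.X (i, π i)

lemma eval_detPoly (n : ℕ) (X : Matrix (Fin n) (Fin n) ℂ) :
    MvPolynomial.eval (fun p => X p.1 p.2) (detPoly n) = X.det := by
  rw [← Matrix.det_transpose, Matrix.det_apply']
  simp [detPoly, Matrix.transpose_apply]

lemma eval_smul_of_isHomogeneous {σ : Type*} {f : MvPolynomial σ ℂ} {n : ℕ}
    (hf : f.IsHomogeneous n) (c : ℂ) (x : σ → ℂ) :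
    MvPolynomial.eval (fun i => c * x i) f = c ^ n * MvPolynomial.eval x f := by
  rw [MvPolynomial.eval_eq, MvPolynomial.eval_eq, Finset.mul_sum]
  refine Finset.sum_congr rfl fun d hd => ?_
  have hdeg : d.degree = n := by
    by_contra h
    exact (MvPolynomial.mem_support_iff.mp hd) (hf.coeff_eq_zero h)
  simp_rw [mul_pow, Finset.prod_mul_distrib, Finset.prod_pow_eq_pow_sum]
  rw [← hdeg, Finsupp.degree]
  change _ = c ^ (∑ i ∈ d.support, d i) * _
  ring

theorem det_characterized_by_symmetries (n : ℕ) (hn : 1 ≤ n)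
    (f : MvPolynomial (Fin n × Fin n) ℂ)
    (hhom : f.IsHomogeneous n)
    (hAB : ∀ A B X : Matrix (Fin n) (Fin n) ℂ, A.det = 1 → B.det = 1 →
      MvPolynomial.eval (fun p => (A * X * B) p.1 p.2) f =
      MvPolynomial.eval (fun p => X p.1 p.2) f)
    (htrans : ∀ X : Matrix (Fin n) (Fin n) ℂ,
      MvPolynomial.eval (fun p => Xᵀ p.1 p.2) f =
      MvPolynomial.eval (fun p => X p.1 p.2) f) :
    ∃ z : ℂ, f = MvPolynomial.C z * detPoly n := by
  set z : ℂ := MvPolynomial.eval (fun p => (1 : Matrix (Fin n) (Fin n) ℂ) p.1 p.2) f with hz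
  refine ⟨z, ?_⟩
  -- key: for invertible X, eval X f = z * det X
  have key : ∀ X : Matrix (Fin n) (Fin n) ℂ, X.det ≠ 0 →
      MvPolynomial.eval (fun p => X p.1 p.2) f = z * X.det := by
    intro X hX
    obtain ⟨t, ht⟩ : ∃ t : ℂ, t ^ n = X.det :=
      IsAlgClosed.exists_pow_nat_eq X.det (by omega)
    have ht0 : t ≠ 0 := fun h => hX (by rw [← ht, h, zero_pow (by omega)])
    set Y : Matrix (Fin n) (Fin n) ℂ := t⁻¹ • X with hYdef
    have hY : Y.det = 1 := by
      simp only [hYdef, Matrix.det_smul, Fintype.card_fin, inv_pow, ht]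
      exact inv_mul_cancel₀ hX
    have h1 : MvPolynomial.eval (fun p => Y p.1 p.2) f = z := by
      have := hAB Y 1 1 hY (by simp)
      simpa using this
    have hXY : X = t • Y := (smul_inv_smul₀ ht0 X).symm
    rw [hXY]
    rw [show (fun p : Fin n × Fin n => (t • Y) p.1 p.2)
        = (fun p : Fin n × Fin n => t * Y p.1 p.2) from rfl]
    rw [eval_smul_of_isHomogeneous hhom t, h1]
    have hdet : (t • Y).det = t ^ n := by
      simp [Matrix.det_smul, hY]
    rw [hdet]
    ring
  -- from key, det * (f - z * detPoly) = 0 everywhere, hence as a polynomial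
  have hmul : detPoly n * (f - MvPolynomial.C z * detPoly n) = 0 := by
    apply MvPolynomial.funext
    intro x
    have hx : (fun p : Fin n × Fin n => (Matrix.of fun i j => x (i, j)) p.1 p.2) = x := by
      funext p; rfl
    set X : Matrix (Fin n) (Fin n) ℂ := Matrix.of fun i j => x (i, j)
    rw [_root_.map_mul, map_sub, _root_.map_mul, map_zero, MvPolynomial.eval_C]
    rw [show x = fun p : Fin n × Fin n => X p.1 p.2 from hx.symm] at *
    rw [eval_detPoly]
    by_cases h : X.det = 0
    · rw [h]; ring
    · rw [key X h]; ring
  have hd0 : detPoly n ≠ 0 := by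
    intro h
    have := eval_detPoly n 1
    rw [h] at this
    simp at this
  have h := (mul_eq_zero.mp hmul).resolve_left hd0
  exact sub_eq_zero.mp h
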